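/- Let ε > 0 and let G be a simple graph on n vertices with m ≥ 1 edges, maximum degree Δ, and average degree d̄ = 2m/n. If the edge density satisfies 2m/n² ≤ ε/2 and Δ + 1 < (2−ε)·d̄, then BC_k(G) holds for every k with 1 ≤ k ≤ n. -/

import Mathlib

open Finset

namespace Brouwer

variable {V : Type*}

/-- The sum of the `k` largest values of `f` on a finite type, expressed as the
supremum over all `k`-element subsets of the sum of `f` over the subset. -/
noncomputable def sumKLargest [Fintype V] (f : V → ℝ) (k : ℕ) : ℝ :=
  sSup { x : ℝ | ∃ T : Finset V, T.card = k ∧ ∑ i ∈ T, f i = x }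

/-- The Laplacian matrix of a finite simple graph is Hermitian (real symmetric). -/
theorem lapMatrix_isHermitian [Fintype V] [DecidableEq V] (G : SimpleGraph V)
    [DecidableRel G.Adj] : (G.lapMatrix ℝ).IsHermitian := by
  rw [Matrix.IsHermitian, Matrix.conjTranspose_eq_transpose_of_trivial]
  exact G.isSymm_lapMatrix ℝ

/-- The adjacency matrix of a finite simple graph is Hermitian (real symmetric). -/
theorem adjMatrix_isHermitian [Fintype V] [DecidableEq V] (G : SimpleGraph V)
    [DecidableRel G.Adj] : (G.adjMatrix ℝ).IsHermitian := by
  rw [Matrix.IsHermitian, Matrix.conjTranspose_eq_transpose_of_trivial]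
  exact G.isSymm_adjMatrix

/-- The (multiset of) eigenvalues of the Laplacian matrix of `G`, indexed by vertices. -/
noncomputable def lapEig [Fintype V] [DecidableEq V] (G : SimpleGraph V) : V → ℝ := by
  classical exact (lapMatrix_isHermitian G).eigenvalues

/-- The (multiset of) eigenvalues of the adjacency matrix of `G`, indexed by vertices. -/
noncomputable def adjEig [Fintype V] [DecidableEq V] (G : SimpleGraph V) : V → ℝ := by
  classical exact (adjMatrix_isHermitian G).eigenvalues

/-- `sLap G k` is `s_k(G)`, the sum of the `k` largest Laplacian eigenvalues of `G`. -/
noncomputable def sLap [Fintype V] [DecidableEq V] (G : SimpleGraph V) (k : ℕ) : ℝ :=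
  sumKLargest (lapEig G) k

/-- The number of edges of `G`. -/
noncomputable def numEdges [Fintype V] (G : SimpleGraph V) : ℕ := by
  classical exact G.edgeFinset.card

/-- `BC G k`: Brouwer's conjectured inequality `s_k(G) ≤ m + (k+1 choose 2)`. -/
def BC [Fintype V] [DecidableEq V] (G : SimpleGraph V) (k : ℕ) : Prop :=
  sLap G k ≤ numEdges G + (k + 1).choose 2

/-- Number of edges of `G` with both endpoints in `S`. -/
noncomputable def edgesWithin [Fintype V] [DecidableEq V] (G : SimpleGraph V)
    (S : Finset V) : ℕ := by
  classical exact (G.edgeFinset.filter (fun e => ∀ v ∈ e, v ∈ S)).card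

/-- The adjacency spectral radius of `G`, i.e. the largest adjacency eigenvalue. -/
noncomputable def specRad [Fintype V] [DecidableEq V] (G : SimpleGraph V) : ℝ :=
  sumKLargest (adjEig G) 1

/-- The maximum subgraph spectral density `t(G)`:
the supremum of `ρ(G[S])/|S|` over nonempty vertex subsets `S`. -/
noncomputable def maxDensity [Fintype V] [DecidableEq V] (G : SimpleGraph V) : ℝ :=
  sSup { x : ℝ | ∃ S : Finset V, S.Nonempty ∧
    x = specRad (G.induce (↑S : Set V)) / (S.card : ℝ) }

/-- Edge-edit distance between two graphs on the same vertex set. -/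
noncomputable def editDistance [Fintype V] (G H : SimpleGraph V) : ℕ := by
  classical exact (symmDiff G.edgeFinset H.edgeFinset).card

/-- A split graph: the vertex set partitions into a clique and an independent set. -/
def IsSplit (G : SimpleGraph V) : Prop :=
  ∃ C : Set V, G.IsClique C ∧ Gᶜ.IsClique Cᶜ

/-- The splittance of `G`: the least number of edge edits needed to reach a split graph. -/
noncomputable def splittance [Fintype V] (G : SimpleGraph V) : ℕ :=
  sInf { d : ℕ | ∃ H : SimpleGraph V, IsSplit H ∧ editDistance G H = d }

/-- The join `G + K₁` of `G` with one new vertex adjacent to every vertex of `G`. -/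
def joinOne (G : SimpleGraph V) : SimpleGraph (Option V) where
  Adj x y := x ≠ y ∧ ∀ a, x = some a → ∀ b, y = some b → G.Adj a b
  symm := ⟨by
    rintro x y ⟨hxy, h⟩
    exact ⟨hxy.symm, fun a ha b hb => (h b hb a ha).symm⟩⟩
  loopless := ⟨by rintro x ⟨hxx, -⟩; exact hxx rfl⟩


section BrouwerHelpers

open Matrix

variable {V : Type*} [Fintype V] [DecidableEq V]

private lemma conj_sq_trace (U D B : Matrix V V ℝ) (hU : star U * U = 1)
    (hB : B = U * D * star U) : (B * B).trace = (D * D).trace := by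
  subst hB
  have h : U * D * star U * (U * D * star U) = U * (D * ((star U * U) * D)) * star U := by
    noncomm_ring
  rw [h, hU, one_mul, Matrix.trace_mul_cycle, ← mul_assoc, hU, one_mul]

private lemma trace_eq_sum_eig (A : Matrix V V ℝ) (hA : A.IsHermitian) :
    A.trace = ∑ i, hA.eigenvalues i := by
  nth_rewrite 1 [hA.spectral_theorem]
  rw [Unitary.conjStarAlgAut_apply, Matrix.trace_mul_cycle, Matrix.mem_unitaryGroup_iff'.mp (hA.eigenvectorUnitary).2,
    one_mul, Matrix.trace_diagonal]
  simp

private lemma trace_sq_eq_sum_sq (A : Matrix V V ℝ) (hA : A.IsHermitian) :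
    (A * A).trace = ∑ i, (hA.eigenvalues i)^2 := by
  rw [conj_sq_trace _ (diagonal (RCLike.ofReal ∘ hA.eigenvalues)) _
      (Matrix.mem_unitaryGroup_iff'.mp (hA.eigenvectorUnitary).2) hA.spectral_theorem,
    Matrix.diagonal_mul_diagonal, Matrix.trace_diagonal]
  simp [sq]

private lemma trace_lap_sq (G : SimpleGraph V) [DecidableRel G.Adj] :
    (G.lapMatrix ℝ * G.lapMatrix ℝ).trace = ∑ i, ((G.degree i : ℝ)^2 + (G.degree i : ℝ)) := by
  have hsymm : ∀ i j : V, G.lapMatrix ℝ j i = G.lapMatrix ℝ i j := by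
    intro i j
    exact (congrFun (congrFun (G.isSymm_lapMatrix ℝ) j) i).symm
  rw [Matrix.trace]
  simp only [Matrix.diag_apply, Matrix.mul_apply]
  have key : ∀ i : V, ∑ j, G.lapMatrix ℝ i j * G.lapMatrix ℝ j i
      = (G.degree i : ℝ)^2 + G.degree i := by
    intro i
    have hterm : ∀ j, G.lapMatrix ℝ i j * G.lapMatrix ℝ j i =
        (if i = j then (G.degree i : ℝ)^2 else 0) + (if G.Adj i j then 1 else 0) := by
      intro j
      rw [hsymm i j]
      simp only [SimpleGraph.lapMatrix, Matrix.sub_apply, SimpleGraph.degMatrix,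
        Matrix.diagonal_apply, SimpleGraph.adjMatrix_apply]
      by_cases hij : i = j
      · subst hij; simp [G.irrefl, sq]
      · simp only [if_neg hij]
        by_cases hadj : G.Adj i j <;> simp [hadj]
    rw [Finset.sum_congr rfl fun j _ => hterm j, Finset.sum_add_distrib,
      Finset.sum_ite_eq Finset.univ i (fun _ => (G.degree i : ℝ)^2)]
    simp only [Finset.mem_univ, if_true]
    rw [← SimpleGraph.degree_eq_sum_if_adj]
  rw [Finset.sum_congr rfl fun i _ => key i]

private lemma trace_lap (G : SimpleGraph V) [DecidableRel G.Adj] :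
    (G.lapMatrix ℝ).trace = ∑ i, (G.degree i : ℝ) := by
  rw [Matrix.trace]
  simp only [Matrix.diag_apply, SimpleGraph.lapMatrix, Matrix.sub_apply, SimpleGraph.degMatrix,
    Matrix.diagonal_apply_eq, SimpleGraph.adjMatrix_apply, if_neg (G.irrefl), sub_zero]

private lemma lapEig_nonneg (G : SimpleGraph V) (i : V) : 0 ≤ lapEig G i := by
  classical
  unfold lapEig
  exact (SimpleGraph.posSemidef_lapMatrix ℝ G).eigenvalues_nonneg i

private lemma sum_degree_eq (G : SimpleGraph V) [DecidableRel G.Adj] :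
    ∑ v, G.degree v = 2 * numEdges G := by
  classical
  unfold numEdges
  rw [G.sum_degrees_eq_twice_card_edges]
  congr!

private lemma sum_lapEig (G : SimpleGraph V) [DecidableRel G.Adj] :
    ∑ i, lapEig G i = 2 * (numEdges G : ℝ) := by
  classical
  unfold lapEig
  rw [← trace_eq_sum_eig, trace_lap, ← Nat.cast_sum]
  norm_cast
  rw [show (2 * numEdges G) = 2 * G.edgeFinset.card by unfold numEdges; congr!,
    ← G.sum_degrees_eq_twice_card_edges]
  congr!

private lemma sum_sq_lapEig (G : SimpleGraph V) [DecidableRel G.Adj] :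
    ∑ i, (lapEig G i)^2 = ∑ i, ((G.degree i : ℝ)^2 + (G.degree i : ℝ)) := by
  classical
  unfold lapEig
  rw [← trace_sq_eq_sum_sq, trace_lap_sq]
  congr!

private lemma poly_ineq (M K N : ℝ) (hM : 0 ≤ M) (hK : 0 ≤ K) (hN : 0 ≤ N) (hMN : M ≤ N^2) :
    8*M^2*K*(N^2 - M) ≤ N^3*(M + K^2)^2 := by
  have h1 : 256*K^2*M^3 ≤ 27*(M + K^2)^4 := by
    nlinarith [mul_nonneg (sq_nonneg (3*K^2 - M))
      (show (0:ℝ) ≤ 3*K^4 + 14*K^2*M + 27*M^2 by positivity)]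
  have h2 : 27*M*(N^2 - M)^2 ≤ 4*N^6 := by
    nlinarith [mul_nonneg (sq_nonneg (3*M - N^2)) (show (0:ℝ) ≤ 4*N^2 - 3*M by nlinarith)]
  have h4 := mul_le_mul h1 h2 (by positivity) (by positivity)
  have h5 : 0 ≤ 8*M^2*K*(N^2 - M) := by
    have : (0:ℝ) ≤ N^2 - M := by linarith
    positivity
  have h6 : 0 ≤ N^3*(M + K^2)^2 := by positivity
  have h3 : (8*M^2*K*(N^2 - M))^2 ≤ (N^3*(M + K^2)^2)^2 := by nlinarith [h4]
  calc 8*M^2*K*(N^2 - M) = Real.sqrt ((8*M^2*K*(N^2 - M))^2) := (Real.sqrt_sq h5).symm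
    _ ≤ Real.sqrt ((N^3*(M + K^2)^2)^2) := Real.sqrt_le_sqrt h3
    _ = N^3*(M + K^2)^2 := Real.sqrt_sq h6

end BrouwerHelpers

set_option maxHeartbeats 1600000 in
/-- if `ε > 0`, `m ≥ 1`, the edge density satisfies `2m/n² ≤ ε/2` and
`Δ + 1 < (2-ε)·d̄`, then `BC_k(G)` holds for every `1 ≤ k ≤ n`. -/
theorem bc_of_low_density_degree {V : Type*} [Fintype V] [DecidableEq V] (G : SimpleGraph V)
    [DecidableRel G.Adj] (ε : ℝ) (hε : 0 < ε) (hedge : 1 ≤ numEdges G) (n d : ℝ)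
    (hn : n = (Fintype.card V : ℝ)) (hd : d = 2 * (numEdges G : ℝ) / n)
    (hdens : 2 * (numEdges G : ℝ) / n ^ 2 ≤ ε / 2)
    (hΔ : (G.maxDegree : ℝ) + 1 < (2 - ε) * d) :
    ∀ k : ℕ, 1 ≤ k → k ≤ Fintype.card V → BC G k := by
  intro k hk1 hkn
  have hmR1 : (1:ℝ) ≤ (numEdges G : ℝ) := by exact_mod_cast hedge
  have hdeg : ∀ v : V, (G.degree v : ℝ) ≤ (G.maxDegree : ℝ) := fun v => by
    exact_mod_cast G.degree_le_maxDegree v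
  have hΔ0 : (0:ℝ) ≤ (G.maxDegree : ℝ) := Nat.cast_nonneg _
  have hsumdegN := sum_degree_eq G
  have hsumdeg : ∑ v : V, (G.degree v : ℝ) = 2 * (numEdges G : ℝ) := by
    rw [← Nat.cast_sum, hsumdegN]; push_cast; ring
  have hcardpos : 0 < Fintype.card V := by
    by_contra hc
    push_neg at hc
    interval_cases h : Fintype.card V
    have huniv : (Finset.univ : Finset V) = ∅ := Finset.card_eq_zero.mp h
    have : (0:ℕ) = 2 * numEdges G := by rw [← hsumdegN, huniv, Finset.sum_empty]
    omega
  have hn0 : (0:ℝ) < n := by rw [hn]; exact_mod_cast hcardpos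
  have hn3 : (0:ℝ) < n^3 := by positivity
  set mR : ℝ := (numEdges G : ℝ) with hmRdef
  have hmR0 : (0:ℝ) < mR := by linarith
  -- degree-density consequence
  have h1 : ((G.maxDegree : ℝ) + 1) * n < (2 - ε) * (2 * mR) := by
    have h1a := hΔ
    rw [hd] at h1a
    have h1b := mul_lt_mul_of_pos_right h1a hn0
    calc ((G.maxDegree : ℝ) + 1) * n < (2 - ε) * (2 * mR / n) * n := h1b
      _ = (2 - ε) * (2 * mR) := by field_simp
  have h2 : (2 - ε) * (2 * mR) ≤ (2 - 4 * mR / n^2) * (2 * mR) := by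
    have hε' : 4 * mR / n^2 ≤ ε := by
      have := hdens
      rw [div_le_div_iff₀ (by positivity) (by norm_num)] at this
      rw [div_le_iff₀ (by positivity)]
      linarith
    nlinarith
  have h3 : ((G.maxDegree : ℝ) + 1) * n^3 < 4 * mR * (n^2 - 2 * mR) := by
    have h3a : ((G.maxDegree : ℝ) + 1) * n < (2 - 4 * mR / n^2) * (2 * mR) := lt_of_lt_of_le h1 h2
    have h3b := mul_lt_mul_of_pos_right h3a (show (0:ℝ) < n^2 by positivity)
    calc ((G.maxDegree : ℝ) + 1) * n^3 = ((G.maxDegree : ℝ) + 1) * n * n^2 := by ring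
      _ < (2 - 4 * mR / n^2) * (2 * mR) * n^2 := h3b
      _ = 4 * mR * (n^2 - 2 * mR) := by field_simp; ring
  have hM2 : 2 * mR < n^2 := by
    by_contra hc
    push_neg at hc
    have hc2 : 4 * mR * (n^2 - 2 * mR) ≤ 0 :=
      mul_nonpos_of_nonneg_of_nonpos (by positivity) (by linarith)
    nlinarith
  -- eigenvalue facts
  have hnonneg := lapEig_nonneg G
  have hsum : ∑ i, lapEig G i = 2 * mR := sum_lapEig G
  have hsumsq : ∑ i, (lapEig G i)^2 ≤ 2 * mR * ((G.maxDegree : ℝ) + 1) := by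
    rw [sum_sq_lapEig G]
    calc ∑ i, ((G.degree i : ℝ)^2 + (G.degree i : ℝ))
        ≤ ∑ i, ((G.maxDegree : ℝ) + 1) * (G.degree i : ℝ) := by
          apply Finset.sum_le_sum
          intro v _
          have hv := hdeg v
          have hv0 : (0:ℝ) ≤ (G.degree v : ℝ) := Nat.cast_nonneg _
          nlinarith
      _ = ((G.maxDegree : ℝ) + 1) * ∑ i, (G.degree i : ℝ) := by rw [Finset.mul_sum]
      _ = 2 * mR * ((G.maxDegree : ℝ) + 1) := by rw [hsumdeg]; ring
  -- cast of binomial coefficient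
  set K : ℝ := (k : ℝ) with hKdef
  have hK1 : (1:ℝ) ≤ K := by rw [hKdef]; exact_mod_cast hk1
  have hchoose : (((k+1).choose 2 : ℕ) : ℝ) = K * (K + 1) / 2 := by
    rw [Nat.choose_two_right, Nat.add_sub_cancel]
    have hdvd : (2:ℕ) ∣ (k+1) * k := by
      rcases Nat.even_mul_succ_self k with ⟨c, hc⟩
      exact ⟨c, by rw [mul_comm (k+1) k, hc]; ring⟩
    rw [Nat.cast_div hdvd (Nat.cast_ne_zero.mpr (by norm_num))]
    push_cast
    ring
  have hRHS0 : (0:ℝ) ≤ mR + K * (K + 1) / 2 := by nlinarith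
  -- the goal
  show sLap G k ≤ (numEdges G : ℝ) + (((k+1).choose 2 : ℕ) : ℝ)
  rw [hchoose]
  unfold sLap sumKLargest
  apply Real.sSup_le _ hRHS0
  rintro x ⟨T, hT, rfl⟩
  by_cases hcase : 2 * mR ≤ mR + K * (K + 1) / 2
  · calc ∑ i ∈ T, lapEig G i ≤ ∑ i, lapEig G i :=
        Finset.sum_le_univ_sum_of_nonneg hnonneg
      _ = 2 * mR := hsum
      _ ≤ mR + K * (K + 1) / 2 := hcase
  · push_neg at hcase
    have hKKM : K * (K + 1) < 2 * mR := by linarith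
    have hb2 : (∑ i ∈ T, lapEig G i)^2 ≤ K * (2 * mR * ((G.maxDegree : ℝ) + 1)) := by
      calc (∑ i ∈ T, lapEig G i)^2 ≤ (T.card : ℝ) * ∑ i ∈ T, (lapEig G i)^2 :=
            sq_sum_le_card_mul_sum_sq
        _ = K * ∑ i ∈ T, (lapEig G i)^2 := by rw [hT]
        _ ≤ K * ∑ i, (lapEig G i)^2 := by
            refine mul_le_mul_of_nonneg_left ?_ (by linarith)
            exact Finset.sum_le_univ_sum_of_nonneg (fun i => sq_nonneg _)
        _ ≤ K * (2 * mR * ((G.maxDegree : ℝ) + 1)) :=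
            mul_le_mul_of_nonneg_left hsumsq (by linarith)
    have hpoly := poly_ineq (2 * mR) K n (by linarith) (by linarith) (le_of_lt hn0)
      (le_of_lt hM2)
    have hposK : (0:ℝ) < 2 * mR * K := by nlinarith
    have hstep : K * (2 * mR * ((G.maxDegree : ℝ) + 1)) * n^3
        < 8 * mR^2 * K * (n^2 - 2 * mR) := by
      calc K * (2 * mR * ((G.maxDegree : ℝ) + 1)) * n^3
          = (2 * mR * K) * (((G.maxDegree : ℝ) + 1) * n^3) := by ring
        _ < (2 * mR * K) * (4 * mR * (n^2 - 2 * mR)) := by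
            exact mul_lt_mul_of_pos_left h3 hposK
        _ = 8 * mR^2 * K * (n^2 - 2 * mR) := by ring
    have hx2n : (∑ i ∈ T, lapEig G i)^2 * n^3 < 8 * mR^2 * K * (n^2 - 2 * mR) := by
      calc (∑ i ∈ T, lapEig G i)^2 * n^3
          ≤ K * (2 * mR * ((G.maxDegree : ℝ) + 1)) * n^3 :=
            mul_le_mul_of_nonneg_right hb2 (le_of_lt hn3)
        _ < 8 * mR^2 * K * (n^2 - 2 * mR) := hstep
    have he1 : 32 * mR^2 * K * (n^2 - 2 * mR) ≤ n^3 * (2 * mR + K^2)^2 := by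
      linarith [hpoly]
    have he2 : n^3 * ((∑ i ∈ T, lapEig G i)^2) < n^3 * ((2 * mR + K^2)^2 / 4) := by
      linarith
    have he3 : (∑ i ∈ T, lapEig G i)^2 < (2 * mR + K^2)^2 / 4 :=
      (mul_lt_mul_iff_right₀ hn3).mp he2
    have hee : (0:ℝ) ≤ K * (2 * (2 * mR + K^2) + K) := by
      apply mul_nonneg (by linarith)
      nlinarith
    have he4 : (2 * mR + K^2)^2 / 4 ≤ (mR + K * (K + 1) / 2)^2 := by nlinarith [hee]
    have hx2 : (∑ i ∈ T, lapEig G i)^2 ≤ (mR + K * (K + 1) / 2)^2 := by linarith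
    calc (∑ i ∈ T, lapEig G i) ≤ |∑ i ∈ T, lapEig G i| := le_abs_self _
      _ = Real.sqrt ((∑ i ∈ T, lapEig G i)^2) := (Real.sqrt_sq_eq_abs _).symm
      _ ≤ Real.sqrt ((mR + K * (K + 1) / 2)^2) := Real.sqrt_le_sqrt hx2
      _ = mR + K * (K + 1) / 2 := Real.sqrt_sq hRHS0

end Brouwer
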